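/- Let w be a pp-irreducible string and c a strongly stable position of w. Then for every string x, |\widehat{w x}| > 𝓕_w(c) and c is strongly stable in \widehat{w x} (note that \widehat{w x}, being irreducible, is pp-irreducible, so stability in it is defined). -/

import Mathlib

/-!
Common definitions: strings as `List α` over an alphabet `α`, 1-based positions.
-/

variable {α : Type*}

/-- The substring `w[i:j]` (1-based, inclusive; empty when `j < i`). -/
def seg (w : List α) (i j : ℕ) : List α := (w.take j).drop (i - 1)

/-- `w` has an even palindrome of radius `r` centered at position `c`:
`r ≤ c`, `c + r ≤ |w|` and `w[c−k+1] = w[c+k]` for all `1 ≤ k ≤ r`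
(here expressed with 0-based list indexing: `w[c−k]? = w[c+k−1]?`). -/
def PalAt (w : List α) (c r : ℕ) : Prop :=
  r ≤ c ∧ c + r ≤ w.length ∧ ∀ k, 1 ≤ k → k ≤ r → w[c - k]? = w[c + k - 1]?

/-- `ρ_w(c)`: the maximal even-palindrome radius at center `c`. -/
noncomputable def rho (w : List α) (c : ℕ) : ℕ := sSup {r | PalAt w c r}

/-- The reduction relation: `x y yᴿ y z → x y z` for nonempty `y`. -/
def Reduces (w w' : List α) : Prop :=
  ∃ x y z : List α, y ≠ [] ∧ w = x ++ y ++ y.reverse ++ y ++ z ∧ w' = x ++ y ++ z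

/-- A string is irreducible if no reduction applies to it. -/
def ZIrreducible (w : List α) : Prop := ∀ w', ¬ Reduces w w'

def ZReducible (w : List α) : Prop := ∃ w', Reduces w w'

/-- `w` is pp-irreducible if its longest proper prefix `w[1:|w|−1]` is irreducible. -/
def PPIrreducible (w : List α) : Prop := ZIrreducible w.dropLast

/-- `w` is ss-reducible if it is reducible and pp-irreducible. -/
def SSReducible (w : List α) : Prop := ZReducible w ∧ PPIrreducible w

/-- A Z-shape occurrence `⟨p1, p2⟩` in `w`: with `s = p2 − p1 ≥ 1`, `p1 − s ≥ 0`,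
`p2 + s ≤ |w|` and `w[p1−s+1 : p2+s] = x xᴿ x` where `x = w[p1−s+1 : p1]`. -/
def ZOcc (w : List α) (p1 p2 : ℕ) : Prop :=
  p1 < p2 ∧ p2 - p1 ≤ p1 ∧ p2 + (p2 - p1) ≤ w.length ∧
    seg w (p1 - (p2 - p1) + 1) (p2 + (p2 - p1)) =
      seg w (p1 - (p2 - p1) + 1) p1 ++ (seg w (p1 - (p2 - p1) + 1) p1).reverse ++
        seg w (p1 - (p2 - p1) + 1) p1

/-- `c ⊏_w d` : `c ≤ d − ρ_w(d) ≤ d ≤ c + ρ_w(c) ≤ d + ρ_w(d)` with `c ≠ d`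
(written without truncated subtraction). -/
def Sqsub (w : List α) (c d : ℕ) : Prop :=
  c < d ∧ c + rho w d ≤ d ∧ d ≤ c + rho w c ∧ c + rho w c ≤ d + rho w d

/-- `𝓕_w(c)`: the maximum frontier over all palindrome chains from `c`
(a palindrome chain is a nonempty list starting at `c` whose consecutive
elements are related by `⊏_w`; its frontier is `e + ρ_w(e)` for its last element `e`). -/
noncomputable def maxFrontier (w : List α) (c : ℕ) : ℕ :=
  sSup {f | ∃ l : List ℕ, l.head? = some c ∧ l.Chain' (Sqsub w) ∧
      ∃ e, l.getLast? = some e ∧ f = e + rho w e}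

/-- `𝓐_w(d)`: the smallest position `c` with `c ≤ d ≤ 𝓕_w(c)`. -/
noncomputable def originator (w : List α) (d : ℕ) : ℕ :=
  sInf {c | 1 ≤ c ∧ c ≤ d ∧ d ≤ maxFrontier w c}

/-- A position `c` of a pp-irreducible string `w` is stable if `𝓕_w(c) < |w|`. -/
def Stable (w : List α) (c : ℕ) : Prop := maxFrontier w c < w.length

/-- `c` is strongly stable if every position in `[1:c]` is stable. -/
def StronglyStable (w : List α) (c : ℕ) : Prop := ∀ e, 1 ≤ e → e ≤ c → Stable w e

/-- `T` is the output of an end-to-end walk on the path graph labeled `u`: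
there are vertices `p 0 = 0, …, p |T| = |u|`, each `≤ |u|`, consecutive ones
adjacent, and `T[i] = u[max (p (i−1)) (p i)]` (1-based; here 0-based indexing). -/
def EndToEndWalkOutput (u T : List α) : Prop :=
  ∃ p : ℕ → ℕ, p 0 = 0 ∧ p T.length = u.length ∧
    (∀ i, i ≤ T.length → p i ≤ u.length) ∧
    (∀ i, i < T.length → p (i + 1) = p i + 1 ∨ p i = p (i + 1) + 1) ∧
    (∀ i, i < T.length → T[i]? = u[max (p i) (p (i + 1)) - 1]?)

/-- `P` is accurate enough between `a` and `b`:
`min (P e) (b − e) = min (ρ_w e) (b − e)` for all `e ∈ [a:b]`. -/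
def AccEnough (w : List α) (P : ℕ → ℕ) (a b : ℕ) : Prop :=
  ∀ e, a ≤ e → e ≤ b → min (P e) (b - e) = min (rho w e) (b - e)

open Classical in
/-- `ν_w(c)`: the largest `e` with `e ⊏_w c`, or `1` if there is none. -/
noncomputable def nu (w : List α) (c : ℕ) : ℕ :=
  if ∃ e, Sqsub w e c then sSup {e | Sqsub w e c} else 1

/-- `c` is left-good w.r.t. `P` if `P` is accurate enough between `ν_w(c)` and `c`. -/
def LeftGood (w : List α) (P : ℕ → ℕ) (c : ℕ) : Prop := AccEnough w P (nu w c) c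

/-- `c` is right-good w.r.t. `P` if `P` is accurate enough between `c` and `c + ρ_w(c)`. -/
def RightGood (w : List α) (P : ℕ → ℕ) (c : ℕ) : Prop := AccEnough w P c (c + rho w c)

/-! ### Auxiliary development -/

namespace ZProof

variable {α : Type*}

/-- Reachability by palindrome chains. -/
abbrev Reach (w : List α) : ℕ → ℕ → Prop := Relation.ReflTransGen (Sqsub w)

lemma palAt_zero {w : List α} {c : ℕ} (h : c ≤ w.length) : PalAt w c 0 :=
  ⟨Nat.zero_le _, by omega, fun k hk1 hk2 => absurd (hk1.trans hk2) (by omega)⟩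

lemma palAt_mono {w : List α} {c r r' : ℕ} (h : PalAt w c r) (hr : r' ≤ r) : PalAt w c r' :=
  ⟨hr.trans h.1, by have := h.2.1; omega, fun k h1 h2 => h.2.2 k h1 (h2.trans hr)⟩

lemma palAt_bdd {w : List α} {c : ℕ} : BddAbove {r | PalAt w c r} :=
  ⟨c, fun _ hr => hr.1⟩

lemma palAt_rho {w : List α} {c : ℕ} (h : c ≤ w.length) : PalAt w c (rho w c) :=
by
  have h0 : (0:ℕ) ∈ {r | PalAt w c r} := palAt_zero h
  exact Nat.sSup_mem ⟨0, h0⟩ palAt_bdd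

lemma le_rho {w : List α} {c r : ℕ} (h : PalAt w c r) : r ≤ rho w c :=
  le_csSup palAt_bdd h

lemma rho_add_le {w : List α} {c : ℕ} (h : c ≤ w.length) : c + rho w c ≤ w.length :=
  (palAt_rho h).2.1

lemma chain'_reach {R : ℕ → ℕ → Prop} :
    ∀ (l : List ℕ), l.Chain' R → ∀ {a b : ℕ}, l.head? = some a → l.getLast? = some b →
      Relation.ReflTransGen R a b
  | [], _, a, b, h, _ => by simp at h
  | [x], _, a, b, ha, hb => by
      simp only [List.head?_cons, Option.some.injEq] at ha
      simp only [List.getLast?_singleton, Option.some.injEq] at hb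
      subst ha; subst hb; exact .refl
  | x :: y :: t, hch, a, b, ha, hb => by
      have hch := List.isChain_cons_cons.mp hch
      simp only [List.head?_cons, Option.some.injEq] at ha
      rw [List.getLast?_cons_cons] at hb
      exact ha ▸ Relation.ReflTransGen.head hch.1 (chain'_reach (y :: t) hch.2 rfl hb)

lemma reach_chain' {R : ℕ → ℕ → Prop} {a b : ℕ} (h : Relation.ReflTransGen R a b) :
    ∃ l : List ℕ, l.head? = some a ∧ l.Chain' R ∧ l.getLast? = some b := by
  induction h with
  | refl => exact ⟨[a], rfl, List.isChain_singleton a, rfl⟩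
  | @tail b d _ hR ih =>
    obtain ⟨l, hh, hch, hl⟩ := ih
    refine ⟨l ++ [d], ?_, ?_, List.getLast?_concat⟩
    · cases l with
      | nil => simp at hh
      | cons x t => simpa using hh
    · refine List.isChain_append.mpr ?_
      refine ⟨hch, List.isChain_singleton _, fun x hx y hy => ?_⟩
      simp only [List.head?_cons, Option.mem_def, Option.some.injEq] at hy
      rw [hl] at hx
      simp only [Option.mem_def, Option.some.injEq] at hx
      subst hx; subst hy; exact hR

lemma maxFrontier_eq (w : List α) (c : ℕ) :
    maxFrontier w c = sSup {f | ∃ d, Reach w c d ∧ f = d + rho w d} := by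
  unfold maxFrontier
  congr 1
  ext f
  constructor
  · rintro ⟨l, hh, hch, e, hl, rfl⟩
    exact ⟨e, chain'_reach l hch hh hl, rfl⟩
  · rintro ⟨d, hr, rfl⟩
    obtain ⟨l, hh, hch, hl⟩ := reach_chain' hr
    exact ⟨l, hh, hch, d, hl, rfl⟩

lemma reach_le_length {w : List α} {e d : ℕ} (h : Reach w e d) (he : e ≤ w.length) :
    d ≤ w.length := by
  induction h with
  | refl => exact he
  | @tail b d _ hstep ih =>
    have h1 := hstep.2.2.1
    have h2 := rho_add_le (w := w) ih
    omega

lemma frontier_bddAbove {w : List α} {e : ℕ} (he : e ≤ w.length) :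
    BddAbove {f | ∃ d, Reach w e d ∧ f = d + rho w d} := by
  refine ⟨w.length, ?_⟩
  rintro f ⟨d, hr, rfl⟩
  exact rho_add_le (reach_le_length hr he)

lemma le_maxFrontier {w : List α} {e d : ℕ} (h : Reach w e d) (he : e ≤ w.length) :
    d + rho w d ≤ maxFrontier w e := by
  rw [maxFrontier_eq]
  exact le_csSup (frontier_bddAbove he) ⟨d, h, rfl⟩

lemma self_le_maxFrontier {w : List α} {e : ℕ} (he : e ≤ w.length) :
    e ≤ maxFrontier w e :=
  le_trans (Nat.le_add_right _ _) (le_maxFrontier Relation.ReflTransGen.refl he)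

lemma maxFrontier_mem {w : List α} {e : ℕ} (he : e ≤ w.length) :
    ∃ d, Reach w e d ∧ maxFrontier w e = d + rho w d := by
  rw [maxFrontier_eq]
  have hmem := Nat.sSup_mem (s := {f | ∃ d, Reach w e d ∧ f = d + rho w d})
    ⟨e + rho w e, e, .refl, rfl⟩ (frontier_bddAbove he)
  obtain ⟨d, hr, hf⟩ := hmem
  exact ⟨d, hr, hf⟩

lemma maxFrontier_le {w : List α} {e K : ℕ} (he : e ≤ w.length)
    (h : ∀ d, Reach w e d → d + rho w d ≤ K) : maxFrontier w e ≤ K := by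
  rw [maxFrontier_eq]
  exact csSup_le ⟨e + rho w e, e, .refl, rfl⟩ (by rintro f ⟨d, hr, rfl⟩; exact h d hr)

lemma getElem?_eq_of_take_eq {u v : List α} {Λ i : ℕ} (hpre : u.take Λ = v.take Λ)
    (hi : i < Λ) : u[i]? = v[i]? := by
  rw [← List.getElem?_take_of_lt (l := u) hi, ← List.getElem?_take_of_lt (l := v) hi, hpre]

lemma palAt_transfer {u v : List α} {Λ d r : ℕ} (hpre : u.take Λ = v.take Λ)
    (hΛv : Λ ≤ v.length) (hp : PalAt u d r) (hdr : d + r ≤ Λ) : PalAt v d r := by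
  refine ⟨hp.1, by omega, fun k hk1 hk2 => ?_⟩
  have hrd := hp.1
  have h1 : d - k < Λ := by omega
  have h2 : d + k - 1 < Λ := by omega
  rw [← getElem?_eq_of_take_eq hpre h1, ← getElem?_eq_of_take_eq hpre h2]
  exact hp.2.2 k hk1 hk2

lemma rho_transfer {u v : List α} {Λ d : ℕ} (hpre : u.take Λ = v.take Λ)
    (hΛu : Λ ≤ u.length) (hΛv : Λ ≤ v.length) (h : d + rho v d < Λ) :
    rho u d = rho v d := by
  have hdv : d ≤ v.length := by omega
  have hdu : d ≤ u.length := by omega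
  have h1 : rho v d ≤ rho u d :=
    le_rho (palAt_transfer hpre.symm hΛu (palAt_rho hdv) (by omega))
  by_contra hne
  have h2 : rho v d + 1 ≤ rho u d := by omega
  have h3 : PalAt u d (rho v d + 1) := palAt_mono (palAt_rho hdu) h2
  have h4 : PalAt v d (rho v d + 1) := palAt_transfer hpre hΛv h3 (by omega)
  have := le_rho h4
  omega

end ZProof

namespace ZProof

variable {α : Type*}

lemma reduces_of_palAt_palAt {w : List α} {d s : ℕ} (hs : 1 ≤ s)
    (h1 : PalAt w d s) (h2 : PalAt w (d + s) s) : ZReducible w := by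
  have hsd : s ≤ d := h1.1
  have hds : d + s ≤ w.length := h1.2.1
  have hd2s : d + 2 * s ≤ w.length := by have := h2.2.1; omega
  set A := (w.take d).drop (d - s) with hA
  set B := (w.take (d + s)).drop d with hB
  set C := (w.take (d + 2 * s)).drop (d + s) with hC
  have lenA : A.length = s := by simp [hA]; omega
  have lenB : B.length = s := by simp [hB]; omega
  have lenC : C.length = s := by simp [hC]; omega
  have gA : ∀ i, i < s → A[i]? = w[d - s + i]? := by
    intro i hi
    rw [hA, List.getElem?_drop, List.getElem?_take_of_lt (by omega)]
  have gB : ∀ i, i < s → B[i]? = w[d + i]? := by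
    intro i hi
    rw [hB, List.getElem?_drop, List.getElem?_take_of_lt (by omega)]
  have gC : ∀ i, i < s → C[i]? = w[d + s + i]? := by
    intro i hi
    rw [hC, List.getElem?_drop, List.getElem?_take_of_lt (by omega)]
  have hBA : B = A.reverse := by
    apply List.ext_getElem?
    intro i
    by_cases hi : i < s
    · rw [gB i hi, List.getElem?_reverse (by omega), lenA]
      rw [gA (s - 1 - i) (by omega)]
      have e1 : d - s + (s - 1 - i) = d - (i + 1) := by omega
      have e2 : d + i = d + (i + 1) - 1 := by omega
      rw [e1, e2]
      exact (h1.2.2 (i + 1) (by omega) (by omega)).symm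
    · rw [List.getElem?_eq_none (by omega), List.getElem?_eq_none (by simp [lenA]; omega)]
  have hCB : C = B.reverse := by
    apply List.ext_getElem?
    intro i
    by_cases hi : i < s
    · rw [gC i hi, List.getElem?_reverse (by omega), lenB]
      rw [gB (s - 1 - i) (by omega)]
      have e1 : d + (s - 1 - i) = d + s - (i + 1) := by omega
      have e2 : d + s + i = d + s + (i + 1) - 1 := by omega
      rw [e1, e2]
      exact (h2.2.2 (i + 1) (by omega) (by omega)).symm
    · rw [List.getElem?_eq_none (by omega), List.getElem?_eq_none (by simp [lenB]; omega)]
  have hCA : C = A := by rw [hCB, hBA, List.reverse_reverse]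
  have e1 : w.take d = w.take (d - s) ++ A := by
    conv_lhs => rw [← List.take_append_drop (d - s) (w.take d)]
    rw [List.take_take, min_eq_left (by omega)]
  have e2 : w.take (d + s) = w.take d ++ B := by
    conv_lhs => rw [← List.take_append_drop d (w.take (d + s))]
    rw [List.take_take, min_eq_left (by omega)]
  have e3 : w.take (d + 2 * s) = w.take (d + s) ++ C := by
    conv_lhs => rw [← List.take_append_drop (d + s) (w.take (d + 2 * s))]
    rw [List.take_take, min_eq_left (by omega)]
  have hw : w = w.take (d - s) ++ A ++ B ++ C ++ w.drop (d + 2 * s) := by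
    conv_lhs => rw [← List.take_append_drop (d + 2 * s) w, e3, e2, e1]
  refine ⟨w.take (d - s) ++ A ++ w.drop (d + 2 * s), w.take (d - s), A, w.drop (d + 2 * s),
    ?_, ?_, rfl⟩
  · exact List.ne_nil_of_length_pos (by omega)
  · rw [hBA, hCA] at hw
    exact hw

lemma pp_no_two_pals {w : List α} {d s : ℕ} (hpp : PPIrreducible w) (hs : 1 ≤ s)
    (h1 : PalAt w d s) (h2 : PalAt w (d + s) s) (hend : d + 2 * s < w.length) : False := by
  set Λ := w.length - 1 with hΛ
  have hv : w.dropLast = w.take Λ := List.dropLast_eq_take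
  have hpre : w.take Λ = w.dropLast.take Λ := by
    rw [hv, List.take_take, min_self]
  have hΛv : Λ ≤ w.dropLast.length := by
    rw [List.length_dropLast]
  have h1' : PalAt w.dropLast d s := palAt_transfer hpre hΛv h1 (by omega)
  have h2' : PalAt w.dropLast (d + s) s := palAt_transfer hpre hΛv h2 (by omega)
  obtain ⟨v', hv'⟩ := reduces_of_palAt_palAt hs h1' h2'
  exact hpp v' hv'

lemma straddle {w : List α} {e b q : ℕ} (h : Reach w e b) (h1 : e ≤ q) (h2 : q ≤ b) :
    Reach w e q ∨ ∃ d, Reach w e d ∧ d < q ∧ q ≤ d + rho w d := by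
  induction h with
  | refl =>
    left
    have : q = e := le_antisymm h2 h1
    subst this
    exact .refl
  | @tail b' d' hr hstep ih =>
    by_cases hqb : q ≤ b'
    · exact ih hqb
    · right
      exact ⟨b', hr, by omega, by have := hstep.2.2.1; omega⟩

lemma frontier_absorb {w : List α} {e q : ℕ} (hpp : PPIrreducible w)
    (hew : e ≤ w.length) (heq : e ≤ q) (hq : q ≤ maxFrontier w e)
    (hstab : maxFrontier w e < w.length) : q + rho w q ≤ maxFrontier w e := by
  obtain ⟨dm, hrd, hMF⟩ := maxFrontier_mem hew
  have key : Reach w e q ∨ ∃ d, Reach w e d ∧ d < q ∧ q ≤ d + rho w d := by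
    by_cases hqd : q ≤ dm
    · exact straddle hrd heq hqd
    · right; exact ⟨dm, hrd, by omega, by omega⟩
  rcases key with hq' | ⟨d, hrd', hdq, hqd⟩
  · exact le_maxFrontier hq' hew
  · have hdw : d ≤ w.length := reach_le_length hrd' hew
    have hqw : q ≤ w.length := by omega
    have hfd : d + rho w d ≤ maxFrontier w e := le_maxFrontier hrd' hew
    set a := q - d with ha
    have ha1 : 1 ≤ a := by omega
    have hrdq : a ≤ rho w d := by omega
    by_cases hrq : rho w q ≤ a
    · by_cases hcmp : d + rho w d ≤ q + rho w q
      · have hsq : Sqsub w d q := ⟨hdq, by omega, hqd, hcmp⟩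
        exact le_maxFrontier (hrd'.tail hsq) hew
      · omega
    · exfalso
      have hp1 : PalAt w d a := palAt_mono (palAt_rho hdw) hrdq
      have hp2 : PalAt w q a := palAt_mono (palAt_rho hqw) (by omega)
      have hda : d + a = q := by omega
      have hq2 : q + rho w q ≤ w.length := rho_add_le hqw
      exact pp_no_two_pals hpp ha1 hp1 (by rwa [hda]) (by omega)

lemma reach_transfer {w u : List α} {Λ e : ℕ} (hpp : PPIrreducible w)
    (hpre : u.take Λ = w.take Λ) (hΛu : Λ ≤ u.length) (hΛw : Λ ≤ w.length)
    (hew : e ≤ w.length) (hG : maxFrontier w e < Λ) :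
    maxFrontier u e = maxFrontier w e := by
  have hkey : ∀ d, Reach u e d → Reach w e d ∧ rho u d = rho w d := by
    intro d h
    induction h with
    | refl =>
      refine ⟨.refl, rho_transfer hpre hΛu hΛw ?_⟩
      have := le_maxFrontier (w := w) (e := e) .refl hew
      omega
    | @tail b d hr hstep ih =>
      obtain ⟨hrw, hrho⟩ := ih
      have hbG : b + rho w b ≤ maxFrontier w e := le_maxFrontier hrw hew
      have hs1 : b < d := hstep.1
      have hdb : d ≤ b + rho w b := by have := hstep.2.2.1; omega
      have hdw : d ≤ w.length := by omega
      set s := d - b with hsdef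
      have hsrho : s ≤ rho w b := by omega
      have hrwd : rho w d ≤ s := by
        by_contra hcon
        have hp1 : PalAt w b s := palAt_mono (palAt_rho (by omega)) hsrho
        have hp2 : PalAt w d s := palAt_mono (palAt_rho hdw) (by omega)
        have hbd : b + s = d := by omega
        have hdr : d + rho w d ≤ w.length := rho_add_le hdw
        exact pp_no_two_pals hpp (by omega) hp1 (by rwa [hbd]) (by omega)
      have hfront : d + rho w d ≤ maxFrontier w e := by
        by_cases hcmp : b + rho w b ≤ d + rho w d
        · have hsq : Sqsub w b d := ⟨hs1, by omega, hdb, hcmp⟩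
          exact le_maxFrontier (hrw.tail hsq) hew
        · omega
      have hrhod : rho u d = rho w d := rho_transfer hpre hΛu hΛw (by omega)
      have hsq : Sqsub w b d :=
        ⟨hs1, by have := hstep.2.1; omega, by have := hstep.2.2.1; omega,
         by have := hstep.2.2.2; omega⟩
      exact ⟨hrw.tail hsq, hrhod⟩
  have hkey2 : ∀ d, Reach w e d → Reach u e d ∧ rho u d = rho w d := by
    intro d h
    induction h with
    | refl =>
      refine ⟨.refl, rho_transfer hpre hΛu hΛw ?_⟩
      have := le_maxFrontier (w := w) (e := e) .refl hew
      omega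
    | @tail b d hr hstep ih =>
      obtain ⟨hru, hrho⟩ := ih
      have hbG : b + rho w b ≤ maxFrontier w e := le_maxFrontier hr hew
      have hdG : d + rho w d ≤ maxFrontier w e := le_maxFrontier (hr.tail hstep) hew
      have hrhod : rho u d = rho w d := rho_transfer hpre hΛu hΛw (by omega)
      have hsq : Sqsub u b d :=
        ⟨hstep.1, by have := hstep.2.1; omega, by have := hstep.2.2.1; omega,
         by have := hstep.2.2.2; omega⟩
      exact ⟨hru.tail hsq, hrhod⟩
  have heu : e ≤ u.length := by
    have := self_le_maxFrontier hew
    omega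
  apply le_antisymm
  · apply maxFrontier_le heu
    intro d hd
    obtain ⟨hrw, hrho⟩ := hkey d hd
    rw [hrho]
    exact le_maxFrontier hrw hew
  · obtain ⟨dm, hrd, hMF⟩ := maxFrontier_mem hew
    obtain ⟨hru, hrho⟩ := hkey2 _ hrd
    rw [hMF, ← hrho]
    exact le_maxFrontier hru heu

end ZProof

namespace ZProof

variable {α : Type*}

lemma palAt_append_mid (x y z : List α) (hy : y ≠ []) :
    PalAt (x ++ y ++ y.reverse ++ y ++ z) (x.length + y.length) y.length ∧
    PalAt (x ++ y ++ y.reverse ++ y ++ z) (x.length + 2 * y.length) y.length := by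
  set s := y.length with hsdef
  have hs1 : 1 ≤ s := List.length_pos_iff.mpr hy
  set u := x ++ y ++ y.reverse ++ y ++ z with hu
  have hu' : u = x ++ (y ++ (y.reverse ++ (y ++ z))) := by
    rw [hu]; simp [List.append_assoc]
  have hlen : u.length = x.length + 3 * s + z.length := by
    rw [hu]; simp; omega
  have g0 : ∀ i, i < s → u[x.length + i]? = y[i]? := by
    intro i hi
    rw [hu', List.getElem?_append_right (by omega)]
    have : x.length + i - x.length = i := by omega
    rw [this, List.getElem?_append_left (by omega)]
  have g1 : ∀ i, i < s → u[x.length + s + i]? = y[s - 1 - i]? := by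
    intro i hi
    rw [hu', List.getElem?_append_right (by omega)]
    have e1 : x.length + s + i - x.length = s + i := by omega
    rw [e1, List.getElem?_append_right (by omega : y.length ≤ s + i)]
    have e2 : s + i - y.length = i := by omega
    rw [e2, List.getElem?_append_left (by simp only [List.length_reverse]; omega)]
    rw [List.getElem?_reverse (by omega)]
  have g2 : ∀ i, i < s → u[x.length + 2 * s + i]? = y[i]? := by
    intro i hi
    rw [hu', List.getElem?_append_right (by omega)]
    have e1 : x.length + 2 * s + i - x.length = 2 * s + i := by omega
    rw [e1, List.getElem?_append_right (by omega : y.length ≤ 2 * s + i)]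
    have e2 : 2 * s + i - y.length = s + i := by omega
    rw [e2, List.getElem?_append_right (by simp only [List.length_reverse]; omega)]
    have e3 : s + i - y.reverse.length = i := by simp only [List.length_reverse]; omega
    rw [e3, List.getElem?_append_left (by omega)]
  constructor
  · refine ⟨by omega, by omega, fun k hk1 hk2 => ?_⟩
    have e1 : x.length + s - k = x.length + (s - k) := by omega
    have e2 : x.length + s + k - 1 = x.length + s + (k - 1) := by omega
    rw [e1, e2, g0 (s - k) (by omega), g1 (k - 1) (by omega)]
    congr 1
    omega
  · refine ⟨by omega, by omega, fun k hk1 hk2 => ?_⟩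
    have e1 : x.length + 2 * s - k = x.length + s + (s - k) := by omega
    have e2 : x.length + 2 * s + k - 1 = x.length + 2 * s + (k - 1) := by omega
    rw [e1, e2, g1 (s - k) (by omega), g2 (k - 1) (by omega)]
    congr 1
    omega

lemma prefix_step {w : List α} {c B : ℕ} (hpp : PPIrreducible w)
    (hc2 : c ≤ w.length) (hBw : B < w.length)
    (hFB : ∀ e, 1 ≤ e → e ≤ c → maxFrontier w e ≤ B)
    (he₀ : ∃ e₀, 1 ≤ e₀ ∧ e₀ ≤ c ∧ maxFrontier w e₀ = B)
    {u u' : List α} (hpre : u.take (B + 1) = w.take (B + 1))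
    (hlen : B + 1 ≤ u.length) (hred : Reduces u u') :
    u'.take (B + 1) = w.take (B + 1) ∧ B + 1 ≤ u'.length := by
  obtain ⟨X, Y, Z, hY, huw, hu'w⟩ := hred
  set s := Y.length with hsdef
  have hs1 : 1 ≤ s := List.length_pos_iff.mpr hY
  set q := X.length + s with hqdef
  have hp1 : PalAt u q s := by rw [huw]; exact (palAt_append_mid X Y Z hY).1
  have hp2 : PalAt u (q + s) s := by
    have := (palAt_append_mid X Y Z hY).2
    rw [huw]
    have e : X.length + 2 * s = q + s := by omega
    rwa [e] at this
  have hΛw : B + 1 ≤ w.length := by omega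
  have hqB : B + 1 ≤ q := by
    by_contra hq
    push_neg at hq
    obtain ⟨e₀, he₀1, he₀c, he₀B⟩ := he₀
    have hq1 : 1 ≤ q := by omega
    have hestar : ∃ e, 1 ≤ e ∧ e ≤ c ∧ e ≤ q ∧ q ≤ maxFrontier w e := by
      rcases le_or_gt q c with hqc | hcq
      · exact ⟨q, hq1, hqc, le_refl _, self_le_maxFrontier (by omega)⟩
      · exact ⟨e₀, he₀1, he₀c, by omega, by omega⟩
    obtain ⟨e, he1, hec, heq, hqMF⟩ := hestar
    have hMFB : maxFrontier w e ≤ B := hFB e he1 hec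
    have hstab : maxFrontier w e < w.length := by omega
    have hew : e ≤ w.length := le_trans hec hc2
    rcases le_or_gt (B + 1) (q + s) with hI | hII
    · -- Case I : palindrome at q crosses the boundary B+1
      set σ := B + 1 - q with hσ
      have hσ1 : 1 ≤ σ := by omega
      have hpwq : PalAt w q σ :=
        palAt_transfer hpre hΛw (palAt_mono hp1 (by omega)) (by omega)
      have hrwq : σ ≤ rho w q := le_rho hpwq
      have habs1 : q + rho w q ≤ maxFrontier w e := frontier_absorb hpp hew heq hqMF hstab
      omega
    · -- Case II : q + s ≤ B
      have hpwq : PalAt w q s :=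
        palAt_transfer hpre hΛw hp1 (by omega)
      have hrwq : s ≤ rho w q := le_rho hpwq
      have habs1 : q + rho w q ≤ maxFrontier w e := frontier_absorb hpp hew heq hqMF hstab
      rcases le_or_gt (B + 1) (q + 2 * s) with hIIb | hIIa
      · -- II.b : second palindrome crosses the boundary
        set σ₂ := B + 1 - (q + s) with hσ₂
        have hσ₂1 : 1 ≤ σ₂ := by omega
        have hpw2 : PalAt w (q + s) σ₂ :=
          palAt_transfer hpre hΛw (palAt_mono hp2 (by omega)) (by omega)
        have hrw2 : σ₂ ≤ rho w (q + s) := le_rho hpw2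
        have h2MF : q + s ≤ maxFrontier w e := by omega
        have habs2 : (q + s) + rho w (q + s) ≤ maxFrontier w e :=
          frontier_absorb hpp hew (by omega) h2MF hstab
        omega
      · -- II.a : the whole Z-shape is inside the common prefix: contradiction with pp-irr
        have hpw2 : PalAt w (q + s) s :=
          palAt_transfer hpre hΛw hp2 (by omega)
        exact pp_no_two_pals hpp hs1 hpwq hpw2 (by omega)
  have htq : u.take q = X ++ Y := by
    rw [huw]
    have : X ++ Y ++ Y.reverse ++ Y ++ Z = (X ++ Y) ++ (Y.reverse ++ Y ++ Z) := by
      simp [List.append_assoc]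
    rw [this]
    exact List.take_left' (by simp [hqdef, hsdef])
  constructor
  · have h1 : u'.take (B + 1) = (X ++ Y).take (B + 1) := by
      rw [hu'w]
      exact List.take_append_of_le_length (by simp [hqdef] at hqB ⊢; omega)
    rw [h1, ← htq, List.take_take, min_eq_left (by omega), hpre]
  · rw [hu'w]
    simp
    simp [hqdef] at hqB
    omega

lemma prefix_path {w : List α} {c B : ℕ} (hpp : PPIrreducible w)
    (hc2 : c ≤ w.length) (hBw : B < w.length)
    (hFB : ∀ e, 1 ≤ e → e ≤ c → maxFrontier w e ≤ B)
    (he₀ : ∃ e₀, 1 ≤ e₀ ∧ e₀ ≤ c ∧ maxFrontier w e₀ = B)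
    {v u : List α} (h : Relation.ReflTransGen Reduces v u)
    (hv : v.take (B + 1) = w.take (B + 1) ∧ B + 1 ≤ v.length) :
    u.take (B + 1) = w.take (B + 1) ∧ B + 1 ≤ u.length := by
  induction h with
  | refl => exact hv
  | tail _ hstep ih => exact prefix_step hpp hc2 hBw hFB he₀ ih.1 ih.2 hstep

end ZProof

/-- if `c` is strongly stable in a pp-irreducible `w`, then for any `x`,
`|\widehat{w x}| > 𝓕_w(c)` and `c` is strongly stable in `\widehat{w x}`. The Z-normal
form is given as a function `N` picking the unique irreducible `→*`-descendant. -/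
theorem stronglyStable_preserved (N : List α → List α)
    (hN : ∀ v : List α, ZIrreducible (N v) ∧ Relation.ReflTransGen Reduces v (N v))
    (w : List α) (hpp : PPIrreducible w) (c : ℕ) (hc1 : 1 ≤ c) (hc2 : c ≤ w.length)
    (hss : StronglyStable w c) (x : List α) :
    maxFrontier w c < (N (w ++ x)).length ∧ StronglyStable (N (w ++ x)) c := by
  classical
  set B := (Finset.Icc 1 c).sup (maxFrontier w) with hBdef
  have hne : (Finset.Icc 1 c).Nonempty := ⟨c, by simp [Finset.mem_Icc]; omega⟩
  have hBw : B < w.length := by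
    rw [hBdef]
    refine (Finset.sup_lt_iff (by exact Nat.lt_of_lt_of_le Nat.one_pos (hc1.trans hc2) : (⊥ : ℕ) < w.length)).mpr ?_
    intro e he
    rw [Finset.mem_Icc] at he
    exact hss e he.1 he.2
  have hFB : ∀ e, 1 ≤ e → e ≤ c → maxFrontier w e ≤ B := fun e h1 h2 =>
    Finset.le_sup (by rw [Finset.mem_Icc]; exact ⟨h1, h2⟩)
  have he₀ : ∃ e₀, 1 ≤ e₀ ∧ e₀ ≤ c ∧ maxFrontier w e₀ = B := by
    obtain ⟨e₀, hmem, heq⟩ := Finset.exists_mem_eq_sup _ hne (maxFrontier w)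
    rw [Finset.mem_Icc] at hmem
    exact ⟨e₀, hmem.1, hmem.2, heq.symm⟩
  obtain ⟨hirr, hpath⟩ := hN (w ++ x)
  set u := N (w ++ x) with hudef
  have hbase : (w ++ x).take (B + 1) = w.take (B + 1) ∧ B + 1 ≤ (w ++ x).length := by
    constructor
    · exact List.take_append_of_le_length (by omega)
    · simp
      omega
  have hu := ZProof.prefix_path hpp hc2 hBw hFB he₀ hpath hbase
  constructor
  · have := hFB c hc1 le_rfl
    omega
  · intro e he1 hec
    have hG : maxFrontier w e < B + 1 := by have := hFB e he1 hec; omega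
    have htr := ZProof.reach_transfer hpp hu.1 hu.2 (by omega) (le_trans hec hc2) hG
    unfold Stable
    rw [htr]
    omega
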